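/- For ω₁, ..., ωₙ in a field extension of 𝔽_q (with Frobenius x ↦ x^q), the Moore determinant M(ω₁,...,ωₙ) = det(ωᵢ^{q^{j-1}})_{1≤i,j≤n} is nonzero if and only if ω₁,...,ωₙ are linearly independent over 𝔽_q. -/
import Mathlib

/-- For `ω₁, …, ωₙ` in a field extension `L` of the finite field `F = 𝔽_q`
(with `q = #F`), the Moore determinant `M(ω₁,…,ωₙ) = det (ωᵢ^{q^{j-1}})` is nonzero
iff `ω₁,…,ωₙ` are linearly independent over `F`. -/
theorem moore_det_ne_zero_iff_linearIndependent
    {F L : Type*} [Field F] [Fintype F] [Field L] [Algebra F L]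
    (q : ℕ) (hq : Fintype.card F = q) (n : ℕ) (ω : Fin n → L) :
    Matrix.det (Matrix.of fun i j : Fin n => ω i ^ q ^ (j : ℕ)) ≠ 0 ↔
      LinearIndependent F ω := by
  classical
  subst hq
  set q := Fintype.card F with hqdef
  set p := ringChar F with hp
  haveI : CharP F p := ringChar.charP F
  obtain ⟨k, hpp, hcard⟩ := FiniteField.card F p
  haveI : CharP L p := charP_of_injective_algebraMap (algebraMap F L).injective p
  haveI : ExpChar L p := .prime hpp
  have hq1 : 1 < q := Fintype.one_lt_card
  -- key: x ↦ x ^ q ^ j is additive on L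
  have hsum : ∀ (j : ℕ) {ι : Type} (s : Finset ι) (f : ι → L),
      (∑ i ∈ s, f i) ^ q ^ j = ∑ i ∈ s, f i ^ q ^ j := by
    intro j ι s f
    have : q ^ j = p ^ ((k : ℕ) * j) := by rw [hqdef, hcard, ← pow_mul]
    rw [this, sum_pow_char_pow]
  -- key: F-scalars pass through x ↦ x ^ q ^ j
  have hsc : ∀ (j : ℕ) (a : F) (x : L),
      (algebraMap F L a * x) ^ q ^ j = algebraMap F L a * x ^ q ^ j := by
    intro j a x
    rw [mul_pow, ← map_pow, FiniteField.pow_card_pow]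
  set M : Matrix (Fin n) (Fin n) L :=
    Matrix.of fun i j : Fin n => ω i ^ q ^ (j : ℕ) with hM
  constructor
  · -- det ≠ 0 → linear independent
    intro hdet
    rw [Fintype.linearIndependent_iff]
    intro g hg
    by_contra hgs
    push_neg at hgs
    obtain ⟨i₀, hi₀⟩ := hgs
    apply hdet
    rw [← Matrix.exists_vecMul_eq_zero_iff]
    refine ⟨fun i => algebraMap F L (g i), ?_, ?_⟩
    · intro h
      exact hi₀ <| (algebraMap F L).injective <| by
        simpa [map_zero] using congrFun h i₀
    · funext j
      have : ∀ i : Fin n, algebraMap F L (g i) * ω i ^ q ^ (j : ℕ)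
          = (algebraMap F L (g i) * ω i) ^ q ^ (j : ℕ) := fun i => (hsc _ _ _).symm
      simp only [Matrix.vecMul, dotProduct, hM, Matrix.of_apply, Pi.zero_apply]
      rw [Finset.sum_congr rfl fun i _ => this i, ← hsum]
      have : (∑ i : Fin n, algebraMap F L (g i) * ω i) = 0 := by
        simpa [Algebra.smul_def] using hg
      rw [this, zero_pow (pow_ne_zero _ (by omega))]
  · -- linear independent → det ≠ 0
    intro hind hdet
    obtain ⟨v, hv0, hMv⟩ := (Matrix.exists_mulVec_eq_zero_iff).mpr hdet
    obtain ⟨j₀, hj₀⟩ := Function.ne_iff.mp hv0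
    have hn : 0 < n := j₀.pos
    -- the q-polynomial with coefficients v
    set P : Polynomial L := ∑ j : Fin n, Polynomial.C (v j) * Polynomial.X ^ (q ^ (j : ℕ))
      with hP
    have hqinj : Function.Injective fun j : ℕ => q ^ j :=
      fun a b h => Nat.pow_right_injective hq1 h
    have hPne : P ≠ 0 := by
      intro h
      have := congrArg (fun Q => Polynomial.coeff Q (q ^ (j₀ : ℕ))) h
      simp only [hP, Polynomial.finset_sum_coeff, Polynomial.coeff_C_mul,
        Polynomial.coeff_X_pow, Polynomial.coeff_zero] at this
      rw [Finset.sum_eq_single j₀] at this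
      · simp at this; exact hj₀ this
      · intro j _ hji
        have : q ^ (j₀ : ℕ) ≠ q ^ (j : ℕ) := fun h => hji (Fin.ext (hqinj h)).symm
        simp [this]
      · simp
    have hdeg : P.natDegree < q ^ n := by
      have : P.natDegree ≤ q ^ (n - 1) := by
        apply Polynomial.natDegree_sum_le_of_forall_le
        intro j _
        refine le_trans (Polynomial.natDegree_C_mul_le _ _) ?_
        rw [Polynomial.natDegree_X_pow]
        exact Nat.pow_le_pow_right (by omega) (by omega)
      exact lt_of_le_of_lt this (Nat.pow_lt_pow_right hq1 (by omega))
    -- the map from F^n into L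
    have hf : Function.Injective fun g : Fin n → F => ∑ i, algebraMap F L (g i) * ω i := by
      intro g₁ g₂ h
      funext i
      have := Fintype.linearIndependent_iff.mp hind (g₁ - g₂) ?_ i
      · simpa [sub_eq_zero] using this
      · have : (∑ i, algebraMap F L (g₁ i) * ω i) - ∑ i, algebraMap F L (g₂ i) * ω i = 0 := by
          rw [sub_eq_zero]; exact h
        rw [← Finset.sum_sub_distrib] at this
        simpa [Algebra.smul_def, sub_mul, map_sub] using this
    have heval : ∀ g : Fin n → F, P.eval (∑ i, algebraMap F L (g i) * ω i) = 0 := by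
      intro g
      simp only [hP, Polynomial.eval_finset_sum, Polynomial.eval_mul, Polynomial.eval_C,
        Polynomial.eval_pow, Polynomial.eval_X]
      have : ∀ j : Fin n, (∑ i, algebraMap F L (g i) * ω i) ^ q ^ (j : ℕ)
          = ∑ i, algebraMap F L (g i) * ω i ^ q ^ (j : ℕ) := by
        intro j
        rw [hsum]
        exact Finset.sum_congr rfl fun i _ => hsc _ _ _
      calc (∑ j : Fin n, v j * (∑ i, algebraMap F L (g i) * ω i) ^ q ^ (j : ℕ))
          = ∑ j : Fin n, ∑ i, v j * (algebraMap F L (g i) * ω i ^ q ^ (j : ℕ)) := by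
            refine Finset.sum_congr rfl fun j _ => ?_
            rw [this j, Finset.mul_sum]
        _ = ∑ i : Fin n, algebraMap F L (g i) * ∑ j, M i j * v j := by
            rw [Finset.sum_comm]
            refine Finset.sum_congr rfl fun i _ => ?_
            rw [Finset.mul_sum]
            refine Finset.sum_congr rfl fun j _ => ?_
            simp only [hM, Matrix.of_apply]
            ring
        _ = 0 := by
            refine Finset.sum_eq_zero fun i _ => ?_
            have : M.mulVec v i = 0 := congrFun hMv i
            simp only [Matrix.mulVec, dotProduct] at this
            rw [this, mul_zero]
    have := Polynomial.eq_zero_of_natDegree_lt_card_of_eval_eq_zero P hf heval ?_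
    · exact hPne this
    · rwa [Fintype.card_fun, Fintype.card_fin]
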